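/- Let A and B be uniform algebras on compact Hausdorff spaces X and Y, Π : Y → X a continuous surjection, and T : C(Y) → C(X) a unital norm-one linear map with T ∘ Π* = id and T(B) = A. Suppose moreover that ‖id_{C(Y)} − Π* ∘ T‖ = 1. Then θ := 2(Π* ∘ T) − id_{C(Y)} is an isometric algebra automorphism of C(Y) with θ ∘ θ = id, and hence there is a homeomorphism ρ : Y → Y of order at most 2 such that (Π* ∘ T)(f) = (f + f ∘ ρ)/2 for all f ∈ C(Y), and the two-element group {id_Y, ρ} acts on Y with orbits equal to the fibres of Π. -/

import Mathlib

/-- A uniform algebra: closed, point-separating, unital subalgebra of C(Z, ℂ). -/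
def IsUniformAlgebra {Z : Type*} [TopologicalSpace Z] [CompactSpace Z] [T2Space Z]
    (A : Subalgebra ℂ C(Z, ℂ)) : Prop :=
  IsClosed (A : Set C(Z, ℂ)) ∧ ∀ z w : Z, z ≠ w → ∃ f ∈ A, f z ≠ f w

/-- `B` is a generalised Cole extension of `A` with associated maps `proj` and `T`:
`proj` is a continuous surjection, `T` is a unital norm-one linear map with
`T ∘ proj* = id` and `T(B) = A`. -/
def IsGenColeExtension {X Y : Type*}
    [TopologicalSpace X] [CompactSpace X] [T2Space X]
    [TopologicalSpace Y] [CompactSpace Y] [T2Space Y]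
    (A : Subalgebra ℂ C(X, ℂ)) (B : Subalgebra ℂ C(Y, ℂ))
    (proj : C(Y, X)) (T : C(Y, ℂ) →L[ℂ] C(X, ℂ)) : Prop :=
  Function.Surjective proj ∧ T 1 = 1 ∧ ‖T‖ = 1 ∧
    (∀ g : C(X, ℂ), T (g.comp proj) = g) ∧
    (∀ f : C(Y, ℂ), f ∈ B → T f ∈ A) ∧
    (∀ g : C(X, ℂ), g ∈ A → ∃ f ∈ B, T f = g)

open Complex ContinuousMap
set_option linter.unusedSectionVars false
set_option maxHeartbeats 1000000

namespace ColeAux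

variable {Y : Type*} [TopologicalSpace Y] [CompactSpace Y] [T2Space Y]

/-- `f` takes real values. -/
def IsRealCM (f : C(Y, ℂ)) : Prop := ∀ z, (f z).im = 0

/-- `f` takes nonnegative real values. -/
def NonnegCM (f : C(Y, ℂ)) : Prop := ∀ z, (f z).im = 0 ∧ 0 ≤ (f z).re

variable (P : C(Y, ℂ) →L[ℂ] C(Y, ℂ))

theorem im_eq_zero (hc : ∀ f : C(Y, ℂ), ‖P f‖ ≤ ‖f‖) (h1 : P 1 = 1) {f : C(Y, ℂ)}
    (hf : IsRealCM f) (y : Y) : (P f y).im = 0 := by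
  set α := (P f y).re with hα
  set β := (P f y).im with hβ
  have key : ∀ t : ℝ, α ^ 2 + (β + t) ^ 2 ≤ ‖f‖ ^ 2 + t ^ 2 := by
    intro t
    set g : C(Y, ℂ) := f + ((t : ℂ) * Complex.I) • 1 with hg
    have hgz : ∀ z, ‖g z‖ ^ 2 = (f z).re ^ 2 + t ^ 2 := by
      intro z
      rw [Complex.sq_norm, Complex.normSq_apply]
      simp [hg, hf z]
      ring
    have hgn : ‖g‖ ≤ Real.sqrt (‖f‖ ^ 2 + t ^ 2) := by
      rw [ContinuousMap.norm_le _ (Real.sqrt_nonneg _)]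
      intro z
      apply Real.le_sqrt_of_sq_le
      rw [hgz z]
      have h1 : (f z).re ^ 2 ≤ ‖f z‖ ^ 2 := by
        rw [Complex.sq_norm, Complex.normSq_apply]
        nlinarith [sq_nonneg (f z).im]
      have h2 : ‖f z‖ ≤ ‖f‖ := norm_coe_le_norm f z
      nlinarith [norm_nonneg (f z), norm_nonneg f]
    have hPg : P g y = P f y + (t : ℂ) * Complex.I := by
      simp [hg, map_add, map_smul, h1]
    have h3 : ‖P g y‖ ≤ Real.sqrt (‖f‖ ^ 2 + t ^ 2) :=
      le_trans (norm_coe_le_norm (P g) y) (le_trans (hc g) hgn)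
    have h4 : ‖P g y‖ ^ 2 ≤ ‖f‖ ^ 2 + t ^ 2 := by
      have := pow_le_pow_left₀ (norm_nonneg (P g y)) h3 2
      rwa [Real.sq_sqrt (by positivity)] at this
    have h5 : ‖P g y‖ ^ 2 = α ^ 2 + (β + t) ^ 2 := by
      rw [hPg, Complex.sq_norm, Complex.normSq_apply]
      simp [hα, hβ]
      ring
    rwa [h5] at h4
  by_contra hβ0
  have hkey := key ((‖f‖ ^ 2 + 1 - α ^ 2 - β ^ 2) / (2 * β))
  have h2β : 2 * β ≠ 0 := by simpa using hβ0
  have : β * ((‖f‖ ^ 2 + 1 - α ^ 2 - β ^ 2) / (2 * β)) 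
      = (‖f‖ ^ 2 + 1 - α ^ 2 - β ^ 2) / 2 := by
    field_simp
  nlinarith [hkey, sq_nonneg β]

theorem re_nonneg (hc : ∀ f : C(Y, ℂ), ‖P f‖ ≤ ‖f‖) (h1 : P 1 = 1) {f : C(Y, ℂ)}
    (hf : NonnegCM f) (y : Y) : 0 ≤ (P f y).re := by
  set M := ‖f‖ with hM
  have hM0 : 0 ≤ M := norm_nonneg f
  set g : C(Y, ℂ) := f - ((M / 2 : ℝ) : ℂ) • 1 with hg
  have hgn : ‖g‖ ≤ M / 2 := by
    rw [ContinuousMap.norm_le _ (by linarith)]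
    intro z
    have h1 : ‖g z‖ ^ 2 = ((f z).re - M / 2) ^ 2 := by
      rw [Complex.sq_norm, Complex.normSq_apply]
      simp [hg, (hf z).1]
      ring
    have h2 : (f z).re ≤ M := by
      have := norm_coe_le_norm f z
      have h3 : (f z).re ≤ ‖f z‖ := Complex.re_le_norm (f z)
      linarith
    have h4 : 0 ≤ (f z).re := (hf z).2
    have : ‖g z‖ ^ 2 ≤ (M / 2) ^ 2 := by rw [h1]; nlinarith
    nlinarith [norm_nonneg (g z)]
  have hPg : P g y = P f y - ((M / 2 : ℝ) : ℂ) := by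
    simp [hg, map_sub, map_smul, h1]
  have h5 : ‖P g y‖ ≤ M / 2 := le_trans (norm_coe_le_norm (P g) y) (le_trans (hc g) hgn)
  have h6 : |(P g y).re| ≤ M / 2 := le_trans (Complex.abs_re_le_norm _) h5
  have h7 : (P g y).re = (P f y).re - M / 2 := by rw [hPg]; simp
  rw [h7] at h6
  rcases abs_le.mp h6 with ⟨h8, _⟩
  linarith


theorem re_ge_half (hc : ∀ f : C(Y, ℂ), ‖P f‖ ≤ ‖f‖)
    (hq : ∀ f : C(Y, ℂ), ‖f - P f‖ ≤ ‖f‖) (h1 : P 1 = 1) {h : C(Y, ℂ)}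
    (hh : NonnegCM h) (hle : ∀ z, (h z).re ≤ 1) {y : Y} (hy : h y = 1) :
    1 / 2 ≤ (P h y).re := by
  set g : C(Y, ℂ) := (2 : ℂ) • h - 1 with hg
  have hgn : ‖g‖ ≤ 1 := by
    rw [ContinuousMap.norm_le _ zero_le_one]
    intro z
    have h1' : ‖g z‖ ^ 2 = (2 * (h z).re - 1) ^ 2 := by
      rw [Complex.sq_norm, Complex.normSq_apply]
      simp [hg, (hh z).1]
      ring
    have h2 := (hh z).2
    have h3 := hle z
    have : ‖g z‖ ^ 2 ≤ 1 := by rw [h1']; nlinarith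
    nlinarith [norm_nonneg (g z)]
  have hgPg : ‖g - P g‖ ≤ 1 := le_trans (hq g) hgn
  have h2 : ‖g y - P g y‖ ≤ 1 := le_trans (norm_coe_le_norm (g - P g) y) hgPg
  have h3 : g y = 1 := by simp [hg, hy]; norm_num
  have h4 : P g y = 2 * P h y - 1 := by simp [hg, map_sub, map_smul, h1]
  have h5 : |(g y - P g y).re| ≤ 1 := le_trans (Complex.abs_re_le_norm _) h2
  have him : (P h y).im = 0 := im_eq_zero P hc h1 (fun z => (hh z).1) y
  have h6 : (g y - P g y).re = 2 - 2 * (P h y).re := by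
    rw [h3, h4]
    simp [Complex.sub_re, Complex.mul_re]
    ring
  rw [h6] at h5
  rcases abs_le.mp h5 with ⟨_, h7⟩
  linarith

theorem theta_re_nonneg (hc : ∀ f : C(Y, ℂ), ‖P f‖ ≤ ‖f‖)
    (hq : ∀ f : C(Y, ℂ), ‖f - P f‖ ≤ ‖f‖) (h1 : P 1 = 1) {f : C(Y, ℂ)}
    (hf : NonnegCM f) (y : Y) : (f y).re ≤ 2 * (P f y).re := by
  set a := (f y).re with ha
  have ha0 : 0 ≤ a := (hf y).2
  rcases eq_or_lt_of_le ha0 with ha0' | ha0'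
  · have := re_nonneg P hc h1 hf y
    linarith
  · set h : C(Y, ℂ) := ⟨fun z => ((min ((f z).re) a / a : ℝ) : ℂ),
      Complex.continuous_ofReal.comp
        (((Complex.continuous_re.comp f.continuous).min continuous_const).div_const a)⟩ with hhdef
    have hhz : ∀ z, h z = ((min ((f z).re) a / a : ℝ) : ℂ) := fun z => rfl
    have hhnn : NonnegCM h := by
      intro z
      refine ⟨by rw [hhz z]; simp, ?_⟩
      rw [hhz z]
      simp only [Complex.ofReal_re]
      have := (hf z).2
      positivity
    have hhle : ∀ z, (h z).re ≤ 1 := by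
      intro z
      rw [hhz z]
      simp only [Complex.ofReal_re]
      rw [div_le_one ha0']
      exact min_le_right _ _
    have hhy : h y = 1 := by
      rw [hhz y, ← ha, min_self, div_self (ne_of_gt ha0')]
      simp
    set f2 : C(Y, ℂ) := f - (a : ℂ) • h with hf2
    have hf2nn : NonnegCM f2 := by
      intro z
      have h1' : f2 z = f z - (a : ℂ) * h z := by simp [hf2]
      constructor
      · rw [h1', hhz z]
        simp [(hf z).1]
      · rw [h1', hhz z, ← Complex.ofReal_mul]
        have : a * (min ((f z).re) a / a) = min ((f z).re) a := by
          field_simp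
        rw [this]
        simp [Complex.sub_re, Complex.ofReal_re, min_le_left]
    have h2 := re_nonneg P hc h1 hf2nn y
    have h3 : P f2 y = P f y - (a : ℂ) * P h y := by simp [hf2, map_sub, map_smul]
    have h4 : (P f2 y).re = (P f y).re - a * (P h y).re := by
      rw [h3]; simp [Complex.sub_re, Complex.mul_re]
    have h5 := re_ge_half P hc hq h1 hhnn hhle hhy
    rw [h4] at h2
    nlinarith


/-- The involution `θ = 2P - id`. -/
noncomputable def theta : C(Y, ℂ) →L[ℂ] C(Y, ℂ) :=
  (2 : ℂ) • P - ContinuousLinearMap.id ℂ C(Y, ℂ)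

theorem theta_apply (f : C(Y, ℂ)) : theta P f = (2 : ℂ) • P f - f := rfl

theorem theta_apply_apply (f : C(Y, ℂ)) (y : Y) :
    theta P f y = 2 * P f y - f y := by
  rw [theta_apply]
  simp

variable {P}

theorem theta_theta (hpp : ∀ f : C(Y, ℂ), P (P f) = P f) (f : C(Y, ℂ)) :
    theta P (theta P f) = f := by
  have h1 : P (theta P f) = P f := by
    rw [theta_apply, map_sub, map_smul, hpp]
    module
  rw [theta_apply P (theta P f), h1, theta_apply]
  module

theorem theta_one (h1 : P 1 = 1) : theta P (1 : C(Y, ℂ)) = 1 := by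
  rw [theta_apply, h1]
  module

theorem theta_real (hc : ∀ f : C(Y, ℂ), ‖P f‖ ≤ ‖f‖) (h1 : P 1 = 1) {f : C(Y, ℂ)}
    (hf : IsRealCM f) : IsRealCM (theta P f) := by
  intro z
  rw [theta_apply_apply]
  simp [Complex.sub_im, Complex.mul_im, im_eq_zero P hc h1 hf z, hf z]

theorem theta_nonneg (hc : ∀ f : C(Y, ℂ), ‖P f‖ ≤ ‖f‖)
    (hq : ∀ f : C(Y, ℂ), ‖f - P f‖ ≤ ‖f‖) (h1 : P 1 = 1) {f : C(Y, ℂ)}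
    (hf : NonnegCM f) : NonnegCM (theta P f) := by
  intro z
  refine ⟨theta_real hc h1 (fun z => (hf z).1) z, ?_⟩
  rw [theta_apply_apply]
  have := theta_re_nonneg P hc hq h1 hf z
  simp only [Complex.sub_re, Complex.mul_re]
  have him := im_eq_zero P hc h1 (fun z => (hf z).1) z
  rw [him]
  norm_num
  linarith

variable (P)

/-- pointwise absolute value of (the real part of) a function. -/
noncomputable def absCM (f : C(Y, ℂ)) : C(Y, ℂ) :=
  ⟨fun z => ((|(f z).re| : ℝ) : ℂ),
    Complex.continuous_ofReal.comp (Complex.continuous_re.comp f.continuous).abs⟩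

theorem absCM_apply (f : C(Y, ℂ)) (z : Y) : absCM f z = ((|(f z).re| : ℝ) : ℂ) := rfl

theorem absCM_real (f : C(Y, ℂ)) : IsRealCM (absCM f) := fun z => by
  rw [absCM_apply]; simp

variable {P}

theorem theta_abs (hc : ∀ f : C(Y, ℂ), ‖P f‖ ≤ ‖f‖)
    (hq : ∀ f : C(Y, ℂ), ‖f - P f‖ ≤ ‖f‖) (h1 : P 1 = 1)
    (hpp : ∀ f : C(Y, ℂ), P (P f) = P f) {f : C(Y, ℂ)} (hf : IsRealCM f) :
    theta P (absCM f) = absCM (theta P f) := by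
  have hθf_real : IsRealCM (theta P f) := theta_real hc h1 hf
  have hθabs_real : IsRealCM (theta P (absCM f)) := theta_real hc h1 (absCM_real f)
  -- upper bound : |θf| ≤ θ|f| pointwise
  have hub : ∀ z, |(theta P f z).re| ≤ (theta P (absCM f) z).re := by
    intro z
    have hs1 : NonnegCM (absCM f - f) := by
      intro w
      constructor
      · simp [ContinuousMap.sub_apply, absCM_apply, hf w]
      · simp only [ContinuousMap.sub_apply, absCM_apply, Complex.sub_re, Complex.ofReal_re]
        have := le_abs_self (f w).re
        linarith
    have hs2 : NonnegCM (absCM f + f) := by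
      intro w
      constructor
      · simp [ContinuousMap.add_apply, absCM_apply, hf w]
      · simp only [ContinuousMap.add_apply, absCM_apply, Complex.add_re, Complex.ofReal_re]
        have := neg_abs_le (f w).re
        linarith
    have ht1 := theta_nonneg hc hq h1 hs1
    have ht2 := theta_nonneg hc hq h1 hs2
    rw [map_sub] at ht1
    rw [map_add] at ht2
    have e1 := (ht1 z).2
    have e2 := (ht2 z).2
    simp only [ContinuousMap.sub_apply, Complex.sub_re, ContinuousMap.add_apply, Complex.add_re] at e1 e2
    rw [abs_le]
    constructor <;> linarith
  -- lower bound via g := absCM (θ f)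
  have hlb : ∀ z, (theta P (absCM f) z).re ≤ |(theta P f z).re| := by
    intro z
    set g : C(Y, ℂ) := absCM (theta P f) with hgdef
    have hg_real : IsRealCM g := absCM_real _
    have hs1 : NonnegCM (g - theta P f) := by
      intro w
      constructor
      · simp [ContinuousMap.sub_apply, hgdef, absCM_apply, hθf_real w]
      · simp only [ContinuousMap.sub_apply, hgdef, absCM_apply, Complex.sub_re, Complex.ofReal_re]
        have := le_abs_self (theta P f w).re
        linarith
    have hs2 : NonnegCM (g + theta P f) := by
      intro w
      constructor
      · simp [ContinuousMap.add_apply, hgdef, absCM_apply, hθf_real w]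
      · simp only [ContinuousMap.add_apply, hgdef, absCM_apply, Complex.add_re, Complex.ofReal_re]
        have := neg_abs_le (theta P f w).re
        linarith
    have ht1 := theta_nonneg hc hq h1 hs1
    have ht2 := theta_nonneg hc hq h1 hs2
    rw [map_sub, theta_theta hpp] at ht1
    rw [map_add, theta_theta hpp] at ht2
    -- so θg ≥ |f| pointwise
    have hθg_ge : NonnegCM (theta P g - absCM f) := by
      intro w
      have e1 := (ht1 w).2
      have e2 := (ht2 w).2
      simp only [ContinuousMap.sub_apply, Complex.sub_re, ContinuousMap.add_apply, Complex.add_re] at e1 e2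
      constructor
      · simp [ContinuousMap.sub_apply, absCM_apply, theta_real hc h1 hg_real w]
      · simp only [ContinuousMap.sub_apply, absCM_apply, Complex.sub_re, Complex.ofReal_re]
        rcases abs_cases (f w).re with h|h <;> rw [h.1] <;> linarith
    have ht3 := theta_nonneg hc hq h1 hθg_ge
    rw [map_sub, theta_theta hpp] at ht3
    have e3 := (ht3 z).2
    simp only [ContinuousMap.sub_apply, Complex.sub_re, hgdef, absCM_apply, Complex.ofReal_re] at e3
    linarith
  ext z
  apply Complex.ext
  · rw [absCM_apply]
    simp only [Complex.ofReal_re]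
    exact le_antisymm (hlb z) (hub z)
  · rw [hθabs_real z, (absCM_real (theta P f)) z]


theorem theta_sq (hc : ∀ f : C(Y, ℂ), ‖P f‖ ≤ ‖f‖)
    (hq : ∀ f : C(Y, ℂ), ‖f - P f‖ ≤ ‖f‖) (h1 : P 1 = 1)
    (hpp : ∀ f : C(Y, ℂ), P (P f) = P f) {f : C(Y, ℂ)} (hf : IsRealCM f) (y : Y) :
    theta P (f * f) y = (theta P f y) ^ 2 := by
  set a : ℝ := (theta P f y).re with ha
  have hay : theta P f y = (a : ℂ) := by
    apply Complex.ext
    · simp [ha]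
    · rw [theta_real hc h1 hf y]
      simp
  set u : C(Y, ℂ) := f - (a : ℂ) • 1 with hu
  have hu_real : IsRealCM u := by
    intro z
    simp [hu, ContinuousMap.sub_apply, ContinuousMap.smul_apply, Complex.sub_im, hf z]
  have huy : theta P u y = 0 := by
    rw [hu, map_sub, map_smul, theta_one h1]
    simp only [ContinuousMap.sub_apply, ContinuousMap.smul_apply, smul_eq_mul, ContinuousMap.one_apply, mul_one]
    rw [hay]
    ring
  have habs0 : theta P (absCM u) y = 0 := by
    rw [theta_abs hc hq h1 hpp hu_real]
    rw [absCM_apply, huy]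
    simp
  -- w := ‖u‖ • |u| - u * u  is nonneg
  set w : C(Y, ℂ) := (‖u‖ : ℂ) • absCM u - u * u with hw
  have hw_nonneg : NonnegCM w := by
    intro z
    have him : (u z).im = 0 := hu_real z
    have h2 : (u * u) z = u z * u z := rfl
    constructor
    · simp [hw, ContinuousMap.sub_apply, ContinuousMap.smul_apply, absCM_apply, h2, Complex.mul_im, him]
    · simp only [hw, ContinuousMap.sub_apply, ContinuousMap.smul_apply, absCM_apply, h2, Complex.sub_re,
        Complex.mul_re, him, smul_eq_mul]
      have h3 : |(u z).re| ≤ ‖u‖ := by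
        have h4 : |(u z).re| ≤ ‖u z‖ := Complex.abs_re_le_norm (u z)
        exact le_trans h4 (norm_coe_le_norm u z)
      simp only [Complex.ofReal_re, Complex.ofReal_im, mul_zero, zero_mul, sub_zero]
      nlinarith [abs_nonneg (u z).re, _root_.sq_abs (u z).re]
  have huu_nonneg : NonnegCM (u * u) := by
    intro z
    have him : (u z).im = 0 := hu_real z
    have h2 : (u * u) z = u z * u z := rfl
    constructor
    · simp [h2, Complex.mul_im, him]
    · simp [h2, Complex.mul_re, him]
      nlinarith [sq_nonneg (u z).re]
  have hθw := theta_nonneg hc hq h1 hw_nonneg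
  have hθuu := theta_nonneg hc hq h1 huu_nonneg
  have e1 := (hθw y).2
  have e2 := (hθuu y).2
  have e3 : theta P w = (‖u‖ : ℂ) • theta P (absCM u) - theta P (u * u) := by
    rw [hw, map_sub, map_smul]
  rw [e3] at e1
  simp only [ContinuousMap.sub_apply, ContinuousMap.smul_apply, smul_eq_mul, Complex.sub_re] at e1
  rw [habs0] at e1
  simp only [mul_zero, Complex.zero_re, zero_sub] at e1
  -- hence θ(u*u) y = 0
  have hzero : theta P (u * u) y = 0 := by
    apply Complex.ext
    · simp; linarith
    · exact (hθuu y).1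
  -- expand u * u
  have hexp : u * u = f * f - (2 * (a : ℂ)) • f + ((a : ℂ) ^ 2) • 1 := by
    ext z
    simp only [hu, ContinuousMap.mul_apply, ContinuousMap.sub_apply, ContinuousMap.add_apply, ContinuousMap.smul_apply, ContinuousMap.one_apply, smul_eq_mul]
    ring
  have hfin : theta P (u * u) y
      = theta P (f * f) y - 2 * (a : ℂ) * theta P f y + (a : ℂ) ^ 2 := by
    rw [hexp, map_add, map_sub, map_smul, map_smul, theta_one h1]
    simp only [ContinuousMap.add_apply, ContinuousMap.sub_apply, ContinuousMap.smul_apply, smul_eq_mul, ContinuousMap.one_apply, mul_one]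
  rw [hzero, hay] at hfin
  rw [hay]
  linear_combination -hfin

theorem theta_mul_real (hc : ∀ f : C(Y, ℂ), ‖P f‖ ≤ ‖f‖)
    (hq : ∀ f : C(Y, ℂ), ‖f - P f‖ ≤ ‖f‖) (h1 : P 1 = 1)
    (hpp : ∀ f : C(Y, ℂ), P (P f) = P f) {u v : C(Y, ℂ)}
    (hu : IsRealCM u) (hv : IsRealCM v) (y : Y) :
    theta P (u * v) y = theta P u y * theta P v y := by
  have hsum : IsRealCM (u + v) := by
    intro z
    simp [ContinuousMap.add_apply, Complex.add_im, hu z, hv z]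
  have e1 := theta_sq hc hq h1 hpp hsum y
  have e2 := theta_sq hc hq h1 hpp hu y
  have e3 := theta_sq hc hq h1 hpp hv y
  have hexp : (u + v) * (u + v) = u * u + v * v + (2 : ℂ) • (u * v) := by
    ext z
    simp only [ContinuousMap.mul_apply, ContinuousMap.add_apply, ContinuousMap.smul_apply, smul_eq_mul]
    ring
  rw [hexp, map_add, map_add, map_smul] at e1
  simp only [ContinuousMap.add_apply, ContinuousMap.smul_apply, smul_eq_mul, map_add] at e1
  rw [e2, e3] at e1
  linear_combination e1 / 2

/-- real part, as a complex-valued continuous map -/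
noncomputable def reCM (f : C(Y, ℂ)) : C(Y, ℂ) :=
  ⟨fun z => (((f z).re : ℝ) : ℂ),
    Complex.continuous_ofReal.comp (Complex.continuous_re.comp f.continuous)⟩

/-- imaginary part, as a complex-valued continuous map -/
noncomputable def imCM (f : C(Y, ℂ)) : C(Y, ℂ) :=
  ⟨fun z => (((f z).im : ℝ) : ℂ),
    Complex.continuous_ofReal.comp (Complex.continuous_im.comp f.continuous)⟩

theorem reCM_apply (f : C(Y, ℂ)) (z : Y) : reCM f z = (((f z).re : ℝ) : ℂ) := rfl
theorem imCM_apply (f : C(Y, ℂ)) (z : Y) : imCM f z = (((f z).im : ℝ) : ℂ) := rfl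

theorem reCM_real (f : C(Y, ℂ)) : IsRealCM (reCM f) := fun z => by rw [reCM_apply]; simp
theorem imCM_real (f : C(Y, ℂ)) : IsRealCM (imCM f) := fun z => by rw [imCM_apply]; simp

theorem decompCM (f : C(Y, ℂ)) : f = reCM f + Complex.I • imCM f := by
  ext z
  simp only [ContinuousMap.add_apply, ContinuousMap.smul_apply, reCM_apply, imCM_apply, smul_eq_mul]
  apply Complex.ext <;> simp

theorem theta_mul (hc : ∀ f : C(Y, ℂ), ‖P f‖ ≤ ‖f‖)
    (hq : ∀ f : C(Y, ℂ), ‖f - P f‖ ≤ ‖f‖) (h1 : P 1 = 1)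
    (hpp : ∀ f : C(Y, ℂ), P (P f) = P f) (f g : C(Y, ℂ)) (y : Y) :
    theta P (f * g) y = theta P f y * theta P g y := by
  have hfg : f * g = (reCM f * reCM g - imCM f * imCM g)
      + Complex.I • (reCM f * imCM g + imCM f * reCM g) := by
    ext z
    simp only [ContinuousMap.mul_apply, ContinuousMap.add_apply, ContinuousMap.sub_apply, ContinuousMap.smul_apply, reCM_apply, imCM_apply,
      smul_eq_mul]
    apply Complex.ext <;>
      simp [Complex.mul_re, Complex.mul_im, Complex.add_re, Complex.add_im,
        Complex.sub_re, Complex.sub_im]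
  have hf' : theta P f y = theta P (reCM f) y + Complex.I * theta P (imCM f) y := by
    conv_lhs => rw [decompCM f]
    rw [map_add, map_smul]
    simp
  have hg' : theta P g y = theta P (reCM g) y + Complex.I * theta P (imCM g) y := by
    conv_lhs => rw [decompCM g]
    rw [map_add, map_smul]
    simp
  rw [hfg, map_add, map_sub, map_smul, map_add]
  simp only [ContinuousMap.add_apply, ContinuousMap.sub_apply, ContinuousMap.smul_apply, smul_eq_mul]
  rw [theta_mul_real hc hq h1 hpp (reCM_real f) (reCM_real g) y,
    theta_mul_real hc hq h1 hpp (imCM_real f) (imCM_real g) y,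
    theta_mul_real hc hq h1 hpp (reCM_real f) (imCM_real g) y,
    theta_mul_real hc hq h1 hpp (imCM_real f) (reCM_real g) y,
    hf', hg']
  linear_combination (-(theta P (imCM f) y * theta P (imCM g) y)) * Complex.I_sq


theorem sep_points {Z : Type*} [TopologicalSpace Z] [CompactSpace Z] [T2Space Z]
    {z w : Z} (h : ∀ f : C(Z, ℂ), f z = f w) : z = w := by
  by_contra hne
  obtain ⟨f, hf0, hf1, -⟩ := exists_continuous_zero_one_of_isClosed
    (isClosed_singleton (x := z)) (isClosed_singleton (x := w))
    (Set.disjoint_singleton.mpr hne)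
  have h2 := h ⟨fun x => ((f x : ℝ) : ℂ), Complex.continuous_ofReal.comp f.continuous⟩
  simp only [ContinuousMap.coe_mk, Complex.ofReal_inj] at h2
  rw [hf0 (Set.mem_singleton z), hf1 (Set.mem_singleton w)] at h2
  simp at h2

end ColeAux


open ColeAux in
theorem gen_cole_extension_aux {Y : Type*}
    [TopologicalSpace Y] [CompactSpace Y] [T2Space Y]
    (P : C(Y, ℂ) →L[ℂ] C(Y, ℂ))
    (hc : ∀ f : C(Y, ℂ), ‖P f‖ ≤ ‖f‖)
    (hq : ∀ f : C(Y, ℂ), ‖f - P f‖ ≤ ‖f‖)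
    (h1 : P 1 = 1) (hpp : ∀ f : C(Y, ℂ), P (P f) = P f) :
    ∃ ρ : Y ≃ₜ Y, (∀ y : Y, ρ (ρ y) = y) ∧
      (∀ (f : C(Y, ℂ)) (y : Y), f (ρ y) = theta P f y) := by
  classical
  -- the characters
  have hne : ∀ y : Y, ((ContinuousMap.evalCLM ℂ y).comp (theta P)
      : WeakDual ℂ C(Y, ℂ)) ≠ 0 := by
    intro y h
    have h2 : ((ContinuousMap.evalCLM ℂ y).comp (theta P)) 1 = 0 := by rw [h]; rfl
    rw [ContinuousLinearMap.comp_apply, theta_one h1] at h2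
    have h3 : (ContinuousMap.evalCLM ℂ y) (1 : C(Y, ℂ)) = 1 := rfl
    rw [h3] at h2
    exact one_ne_zero h2
  have hmulp : ∀ y : Y, ∀ f g : C(Y, ℂ),
      ((ContinuousMap.evalCLM ℂ y).comp (theta P)) (f * g)
        = ((ContinuousMap.evalCLM ℂ y).comp (theta P)) f
          * ((ContinuousMap.evalCLM ℂ y).comp (theta P)) g := by
    intro y f g
    exact theta_mul hc hq h1 hpp f g y
  let χ : Y → WeakDual.characterSpace ℂ C(Y, ℂ) := fun y =>
    ⟨(ContinuousMap.evalCLM ℂ y).comp (theta P), hne y, hmulp y⟩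
  have hχcont : Continuous χ := by
    apply Continuous.subtype_mk
    apply WeakDual.continuous_of_continuous_eval
    intro f
    exact (theta P f).continuous
  let ρfun : Y → Y := fun y => (WeakDual.CharacterSpace.homeoEval Y ℂ).symm (χ y)
  have hρkey : ∀ (f : C(Y, ℂ)) (y : Y), f (ρfun y) = theta P f y := by
    intro f y
    have h2 : WeakDual.CharacterSpace.homeoEval Y ℂ (ρfun y) = χ y :=
      Homeomorph.apply_symm_apply _ _
    calc f (ρfun y) = (WeakDual.CharacterSpace.homeoEval Y ℂ (ρfun y)) f := rfl
      _ = (χ y) f := by rw [h2]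
      _ = theta P f y := rfl
  have hinvol : ∀ y, ρfun (ρfun y) = y := by
    intro y
    apply sep_points
    intro f
    calc f (ρfun (ρfun y)) = theta P f (ρfun y) := hρkey f (ρfun y)
      _ = theta P (theta P f) y := hρkey (theta P f) y
      _ = f y := by rw [theta_theta hpp]
  have hρcont : Continuous ρfun := ((WeakDual.CharacterSpace.homeoEval Y ℂ).symm.continuous).comp hχcont
  exact ⟨⟨⟨ρfun, ρfun, hinvol, hinvol⟩, hρcont, hρcont⟩, hinvol, hρkey⟩

theorem gen_cole_extension_with_bicontractive_projection {X Y : Type*}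
    [TopologicalSpace X] [CompactSpace X] [T2Space X]
    [TopologicalSpace Y] [CompactSpace Y] [T2Space Y]
    (A : Subalgebra ℂ C(X, ℂ)) (hA : IsUniformAlgebra A)
    (B : Subalgebra ℂ C(Y, ℂ)) (hB : IsUniformAlgebra B)
    (proj : C(Y, X)) (T : C(Y, ℂ) →L[ℂ] C(X, ℂ))
    (hGCE : IsGenColeExtension A B proj T)
    (P : C(Y, ℂ) →L[ℂ] C(Y, ℂ)) (hP : ∀ f : C(Y, ℂ), P f = (T f).comp proj)
    (hbicontr : ‖ContinuousLinearMap.id ℂ C(Y, ℂ) - P‖ = 1) :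
    (∀ f g : C(Y, ℂ),
      (2 : ℂ) • P (f * g) - (f * g) = ((2 : ℂ) • P f - f) * ((2 : ℂ) • P g - g)) ∧
    (∀ f : C(Y, ℂ), ‖(2 : ℂ) • P f - f‖ = ‖f‖) ∧
    ∃ ρ : Y ≃ₜ Y,
      (∀ y : Y, ρ (ρ y) = y) ∧
      (∀ (f : C(Y, ℂ)) (y : Y), P f y = (f y + f (ρ y)) / 2) ∧
      (∀ y : Y, proj ⁻¹' {proj y} = {y, ρ y}) := by
  classical
  obtain ⟨hsurj, hT1, hTnorm, hTsec, -, -⟩ := hGCE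
  have hP1 : P 1 = 1 := by
    rw [hP]
    have h0 : ((1 : C(X, ℂ)).comp proj) = 1 := by ext z; simp
    rw [← h0, hTsec, h0]
  have hc : ∀ f : C(Y, ℂ), ‖P f‖ ≤ ‖f‖ := by
    intro f
    rw [hP]
    have h1 : ‖(T f).comp proj‖ ≤ ‖T f‖ := by
      rw [ContinuousMap.norm_le _ (norm_nonneg (T f))]
      intro z
      exact ContinuousMap.norm_coe_le_norm (T f) (proj z)
    calc ‖(T f).comp proj‖ ≤ ‖T f‖ := h1
      _ ≤ ‖T‖ * ‖f‖ := T.le_opNorm f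
      _ = ‖f‖ := by rw [hTnorm, one_mul]
  have hq : ∀ f : C(Y, ℂ), ‖f - P f‖ ≤ ‖f‖ := by
    intro f
    have h1 := (ContinuousLinearMap.id ℂ C(Y, ℂ) - P).le_opNorm f
    rw [hbicontr, one_mul] at h1
    simpa using h1
  have hpp : ∀ f : C(Y, ℂ), P (P f) = P f := by
    intro f
    rw [hP f, hP ((T f).comp proj), hTsec (T f)]
  have hθapp : ∀ (f : C(Y, ℂ)) (y : Y),
      ((2 : ℂ) • P f - f) y = ColeAux.theta P f y := fun f y => rfl
  have hθfun : ∀ f : C(Y, ℂ), ((2 : ℂ) • P f - f) = ColeAux.theta P f := fun f => rfl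
  obtain ⟨ρ, hρinvol, hρkey⟩ := gen_cole_extension_aux P hc hq hP1 hpp
  refine ⟨?_, ?_, ρ, hρinvol, ?_, ?_⟩
  · intro f g
    rw [hθfun, hθfun, hθfun]
    ext y
    rw [ContinuousMap.mul_apply]
    exact ColeAux.theta_mul hc hq hP1 hpp f g y
  · intro f
    rw [hθfun]
    apply le_antisymm
    · rw [ContinuousMap.norm_le _ (norm_nonneg f)]
      intro y
      rw [← hρkey f y]
      exact ContinuousMap.norm_coe_le_norm f (ρ y)
    · rw [ContinuousMap.norm_le _ (norm_nonneg _)]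
      intro y
      have h2 : f y = ColeAux.theta P f (ρ y) := by
        rw [← hρkey f (ρ y), hρinvol y]
      rw [h2]
      exact ContinuousMap.norm_coe_le_norm _ (ρ y)
  · intro f y
    have h2 := hρkey f y
    rw [ColeAux.theta_apply_apply] at h2
    linear_combination -h2 / 2
  · intro y
    have hprojρ : proj (ρ y) = proj y := by
      apply ColeAux.sep_points
      intro g
      have h2 : (g.comp proj) (ρ y) = ColeAux.theta P (g.comp proj) y := hρkey _ y
      have h3 : P (g.comp proj) = g.comp proj := by
        rw [hP, hTsec]
      rw [ColeAux.theta_apply_apply, h3] at h2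
      have h4 : (2 : ℂ) * (g.comp proj) y - (g.comp proj) y = (g.comp proj) y := by ring
      rw [h4] at h2
      exact h2
    ext z
    simp only [Set.mem_preimage, Set.mem_singleton_iff, Set.mem_insert_iff]
    constructor
    · intro hz
      by_contra hcon
      push_neg at hcon
      obtain ⟨hzy, hzρ⟩ := hcon
      have hclosed : IsClosed ({y, ρ y} : Set Y) :=
        ((Set.finite_singleton (ρ y)).insert y).isClosed
      have hdisj : Disjoint ({y, ρ y} : Set Y) ({z} : Set Y) := by
        rw [Set.disjoint_singleton_right]
        simp only [Set.mem_insert_iff, Set.mem_singleton_iff]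
        push_neg
        exact ⟨hzy, hzρ⟩
      obtain ⟨f₀, hf0, hf1, hicc⟩ := exists_continuous_zero_one_of_isClosed
        hclosed isClosed_singleton hdisj
      set fC : C(Y, ℂ) := ⟨fun w => ((f₀ w : ℝ) : ℂ),
        Complex.continuous_ofReal.comp f₀.continuous⟩ with hfC
      have hPzy : P fC z = P fC y := by
        rw [hP]
        show (T fC) (proj z) = (T fC) (proj y)
        rw [hz]
      have eq1 : P fC z = (fC z + fC (ρ z)) / 2 := by
        have h2 := hρkey fC z
        rw [ColeAux.theta_apply_apply] at h2
        linear_combination -h2 / 2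
      have eq2 : P fC y = (fC y + fC (ρ y)) / 2 := by
        have h2 := hρkey fC y
        rw [ColeAux.theta_apply_apply] at h2
        linear_combination -h2 / 2
      have hfz : fC z = 1 := by
        show ((f₀ z : ℝ) : ℂ) = 1
        rw [hf1 (Set.mem_singleton z)]
        simp
      have hfy : fC y = 0 := by
        show ((f₀ y : ℝ) : ℂ) = 0
        rw [hf0 (Set.mem_insert y _)]
        simp
      have hfρy : fC (ρ y) = 0 := by
        show ((f₀ (ρ y) : ℝ) : ℂ) = 0
        rw [hf0 (Set.mem_insert_of_mem y (Set.mem_singleton (ρ y)))]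
        simp
      have hre : 0 ≤ (fC (ρ z)).re := by
        show 0 ≤ ((f₀ (ρ z) : ℝ) : ℂ).re
        rw [Complex.ofReal_re]
        exact (hicc (ρ z)).1
      rw [eq1, eq2, hfz, hfy, hfρy] at hPzy
      have : (fC (ρ z)).re = -1 := by
        have h5 : (1 + fC (ρ z)) = (0 + 0 : ℂ) := by
          field_simp at hPzy
          linear_combination hPzy
        have h6 := congrArg Complex.re h5
        simp only [Complex.add_re, Complex.one_re, Complex.zero_re] at h6
        linarith
      linarith
    · intro hz
      rcases hz with h | h
      · rw [h]
      · rw [h, hprojρ]
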